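/- arXiv:2311.01299 — 2 statements merged into one kernel-verified Lean document; each statement's English description precedes it below -/
import Mathlib

section
/- Let f₁, f₂ : ℝ^d → ℝ be C¹ functions and set f = f₁ − f₂. Then for every x, ∇f(x) · (H_0(∇f₁(x)) − H_0(∇f₂(x))) ≥ |∇f(x)|² / (1 + max{‖∇f₁‖_∞, ‖∇f₂‖_∞}²)^{3/2}, where H_0(z) = z(1+|z|²)^{−1/2}. -/
open scoped RealInnerProductSpace

lemma key_core (a b s p q t : ℝ) (hp : 0 ≤ p) (hq : 0 ≤ q)
    (ha2 : a^2 = 1 + p^2) (hb2 : b^2 = 1 + q^2)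
    (ha1 : 1 ≤ a) (hb1 : 1 ≤ b) (has : a ≤ s) (hbs : b ≤ s)
    (ht : |t| ≤ p * q) :
    (p^2 + q^2 - 2*t) / s^3 ≤ p^2 / a + q^2 / b - (a⁻¹ + b⁻¹) * t := by
  obtain ⟨htl, htr⟩ := abs_le.mp ht
  have hD : 0 ≤ p^2 + q^2 - 2*t := by nlinarith [sq_nonneg (p-q)]
  have ha0 : (0:ℝ) < a := by linarith
  have hb0 : (0:ℝ) < b := by linarith
  have hs0 : (0:ℝ) < s := by linarith
  have hp2 : p^2 = a^2 - 1 := by linarith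
  have hq2 : q^2 = b^2 - 1 := by linarith
  have hiden : p^2 / a + q^2 / b - (a⁻¹ + b⁻¹) * t
      = ((a+b)^2*(p^2+q^2-2*t) - (p^2-q^2)^2) / (2*a*b*(a+b)) := by
    rw [hp2, hq2]; field_simp; ring
  have hab : 1 + p*q ≤ a*b := by
    have habsq : (a*b)^2 = (1+p^2)*(1+q^2) := by rw [mul_pow, ha2, hb2]
    have h : (1+p*q)^2 ≤ (a*b)^2 := by rw [habsq]; nlinarith [sq_nonneg (p-q)]
    nlinarith [mul_pos ha0 hb0, mul_nonneg hp hq]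
  have hN : 4*(p^2+q^2-2*t) ≤ (a+b)^2*(p^2+q^2-2*t) - (p^2-q^2)^2 := by
    have h1 : (p+q)^2 + 4 ≤ (a+b)^2 := by nlinarith
    have h3 : (p-q)^2 ≤ p^2+q^2-2*t := by nlinarith
    have h2 : (p^2-q^2)^2 ≤ (p^2+q^2-2*t) * (p+q)^2 := by
      calc (p^2-q^2)^2 = (p-q)^2 * (p+q)^2 := by ring
        _ ≤ (p^2+q^2-2*t) * (p+q)^2 := mul_le_mul_of_nonneg_right h3 (sq_nonneg (p+q))
    have h4 := mul_le_mul_of_nonneg_right h1 hD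
    linarith [h2, h4]
  have hM4 : 2*a*b*(a+b) ≤ 4*s^3 := by
    have h5 : a*b ≤ s*s := mul_le_mul has hbs hb0.le hs0.le
    have h6 : a*b*a ≤ s*s*s := mul_le_mul h5 has ha0.le (by positivity)
    have h7 : a*b*b ≤ s*s*s := mul_le_mul h5 hbs hb0.le (by positivity)
    linarith [h6, h7]
  rw [hiden, div_le_div_iff₀ (by positivity) (by positivity)]
  have hA := mul_le_mul_of_nonneg_left hM4 hD
  have hB := mul_le_mul_of_nonneg_right hN (pow_nonneg hs0.le 3)
  linarith [hA, hB]


lemma key_vec {E : Type*} [NormedAddCommGroup E] [InnerProductSpace ℝ E]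
    (g₁ g₂ : E) (K : ℝ) (h1 : ‖g₁‖ ≤ K) (h2 : ‖g₂‖ ≤ K) :
    ‖g₁ - g₂‖ ^ 2 / (1 + K ^ 2) ^ ((3 : ℝ) / 2) ≤
      ⟪g₁ - g₂, (Real.sqrt (1 + ‖g₁‖ ^ 2))⁻¹ • g₁ - (Real.sqrt (1 + ‖g₂‖ ^ 2))⁻¹ • g₂⟫ := by
  have hK0 : 0 ≤ K := le_trans (norm_nonneg g₁) h1
  have hs : (1 + K ^ 2) ^ ((3:ℝ)/2) = Real.sqrt (1 + K^2) ^ 3 := by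
    rw [Real.sqrt_eq_rpow, ← Real.rpow_natCast ((1+K^2) ^ ((1:ℝ)/2)) 3,
      ← Real.rpow_mul (by positivity)]
    norm_num
  have hnorm : ‖g₁ - g₂‖ ^ 2 = ‖g₁‖^2 + ‖g₂‖^2 - 2*⟪g₁, g₂⟫ := by
    rw [norm_sub_sq_real]; ring
  have hinner : (⟪g₁ - g₂, (Real.sqrt (1 + ‖g₁‖ ^ 2))⁻¹ • g₁
      - (Real.sqrt (1 + ‖g₂‖ ^ 2))⁻¹ • g₂⟫ : ℝ)
      = ‖g₁‖^2 / Real.sqrt (1 + ‖g₁‖^2) + ‖g₂‖^2 / Real.sqrt (1 + ‖g₂‖^2)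
        - ((Real.sqrt (1 + ‖g₁‖^2))⁻¹ + (Real.sqrt (1 + ‖g₂‖^2))⁻¹) * ⟪g₁, g₂⟫ := by
    rw [inner_sub_right, inner_sub_left, inner_sub_left, real_inner_smul_right,
      real_inner_smul_right, real_inner_smul_right, real_inner_smul_right,
      real_inner_self_eq_norm_sq, real_inner_self_eq_norm_sq, real_inner_comm g₂ g₁]
    field_simp
    ring
  rw [hnorm, hs, hinner]
  exact key_core _ _ _ _ _ _ (norm_nonneg _) (norm_nonneg _)
    (Real.sq_sqrt (by positivity)) (Real.sq_sqrt (by positivity))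
    (by nlinarith [Real.sqrt_nonneg (1+‖g₁‖^2), Real.sq_sqrt (show (0:ℝ) ≤ 1+‖g₁‖^2 by positivity), sq_nonneg ‖g₁‖])
    (by nlinarith [Real.sqrt_nonneg (1+‖g₂‖^2), Real.sq_sqrt (show (0:ℝ) ≤ 1+‖g₂‖^2 by positivity), sq_nonneg ‖g₂‖])
    (Real.sqrt_le_sqrt (by nlinarith [norm_nonneg g₁]))
    (Real.sqrt_le_sqrt (by nlinarith [norm_nonneg g₂]))
    (abs_real_inner_le_norm g₁ g₂)

/-- For C¹ functions `f₁, f₂` with gradients uniformly bounded by `K`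
(`K` playing the role of `max{‖∇f₁‖_∞, ‖∇f₂‖_∞}`), setting `f = f₁ - f₂` and
`H₀(z) = z(1+|z|²)^{-1/2}`, one has the pointwise strong monotonicity bound
`∇f(x) · (H₀(∇f₁(x)) - H₀(∇f₂(x))) ≥ |∇f(x)|²/(1+K²)^{3/2}`. -/
theorem stmt_2 (d : ℕ) (f₁ f₂ : EuclideanSpace ℝ (Fin d) → ℝ)
    (hf₁ : ContDiff ℝ 1 f₁) (hf₂ : ContDiff ℝ 1 f₂)
    (H0 : EuclideanSpace ℝ (Fin d) → EuclideanSpace ℝ (Fin d))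
    (hH0 : ∀ z, H0 z = (Real.sqrt (1 + ‖z‖ ^ 2))⁻¹ • z)
    (K : ℝ)
    (hK₁ : ∀ x, ‖gradient f₁ x‖ ≤ K) (hK₂ : ∀ x, ‖gradient f₂ x‖ ≤ K) :
    ∀ x, ‖gradient (fun y => f₁ y - f₂ y) x‖ ^ 2 / (1 + K ^ 2) ^ ((3 : ℝ) / 2) ≤
      ⟪gradient (fun y => f₁ y - f₂ y) x, H0 (gradient f₁ x) - H0 (gradient f₂ x)⟫ := by
  intro x
  have h1 : HasGradientAt f₁ (gradient f₁ x) x :=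
    ((hf₁.differentiable one_ne_zero) x).hasGradientAt
  have h2 : HasGradientAt f₂ (gradient f₂ x) x :=
    ((hf₂.differentiable one_ne_zero) x).hasGradientAt
  have hsub : HasGradientAt (fun y => f₁ y - f₂ y)
      (gradient f₁ x - gradient f₂ x) x := by
    rw [hasGradientAt_iff_hasFDerivAt]
    have := (h1.hasFDerivAt).sub (h2.hasFDerivAt)
    rw [map_sub]
    exact this
  rw [hsub.gradient, hH0, hH0]
  exact key_vec _ _ K (hK₁ x) (hK₂ x)
end

section
/- Let σ > 0, g ≥ 0, γ ∈ ℝ\{0}, and m(ξ) = |ξ| tanh(b|ξ|) with b > 0 (or m(ξ) = |ξ|). The symbol a(ξ) = 1 − iγ ξ₁ / ((σ|ξ|² + g) m(ξ)) satisfies: a(ξ) ≠ 0 for all ξ ≠ 0, and both a and 1/a are bounded together with all derivatives of order |β| being O(|ξ|^{−|β|}) for |ξ| > 1/2. -/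
open Set
open scoped ContDiff RealInnerProductSpace
set_option linter.unusedSectionVars false
set_option linter.unusedVariables false
set_option maxHeartbeats 1000000

namespace Stmt11Aux

variable {E : Type*} [NormedAddCommGroup E] [InnerProductSpace ℝ E]
variable {F : Type*} [NormedAddCommGroup F] [NormedSpace ℝ F]
variable {G : Type*} [NormedAddCommGroup G] [NormedSpace ℝ G]
variable {H : Type*} [NormedAddCommGroup H] [NormedSpace ℝ H]

def U (E : Type*) [NormedAddCommGroup E] : Set E := {ξ | 1 / 2 < ‖ξ‖}

lemma isOpen_U : IsOpen (U E) := isOpen_lt continuous_const continuous_norm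

lemma udo : UniqueDiffOn ℝ (U E) := isOpen_U.uniqueDiffOn

lemma U_half {ξ : E} (h : ξ ∈ U E) : 1 / 2 < ‖ξ‖ := h

lemma U_pos {ξ : E} (h : ξ ∈ U E) : 0 < ‖ξ‖ := lt_trans (by norm_num) (U_half h)

lemma U_ne {ξ : E} (h : ξ ∈ U E) : ξ ≠ 0 := by
  have h1 := U_pos h
  intro h0
  rw [h0, norm_zero] at h1
  exact lt_irrefl 0 h1

/-- Symbol-type bounds up to order `n` on the region `U`. -/
def SymTo (n : ℕ) (k : ℝ) (f : E → F) : Prop :=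
  ContDiffOn ℝ ∞ f (U E) ∧ ∃ C : ℝ, 0 < C ∧ ∀ i ≤ n, ∀ ξ ∈ U E,
    ‖iteratedFDerivWithin ℝ i f (U E) ξ‖ ≤ C * ‖ξ‖ ^ (k - i)

/-- Symbol of order `k` on `U`. -/
def Sym (k : ℝ) (f : E → F) : Prop := ∀ n, SymTo n k f

lemma Sym.smooth {k : ℝ} {f : E → F} (h : Sym k f) : ContDiffOn ℝ ∞ f (U E) := (h 0).1

lemma rpow_exp_le {ξ : E} (hξ : ξ ∈ U E) {s t : ℝ} (hst : s ≤ t) :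
    ‖ξ‖ ^ s ≤ 2 ^ (t - s) * ‖ξ‖ ^ t := by
  have h0 : (0:ℝ) < ‖ξ‖ := U_pos hξ
  have h1 : ‖ξ‖ ^ s = ‖ξ‖ ^ (s - t) * ‖ξ‖ ^ t := by
    rw [← Real.rpow_add h0]; ring_nf
  have h2 : ‖ξ‖ ^ (s - t) ≤ (1 / 2 : ℝ) ^ (s - t) :=
    Real.rpow_le_rpow_of_nonpos (by norm_num) (U_half hξ).le (by linarith)
  have h3 : ((1 : ℝ) / 2 : ℝ) ^ (s - t) = 2 ^ (t - s) := by
    rw [one_div, Real.inv_rpow (by norm_num : (0:ℝ) ≤ 2),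
      ← Real.rpow_neg (by norm_num : (0:ℝ) ≤ 2), neg_sub]
  rw [h1, ← h3]
  exact mul_le_mul_of_nonneg_right h2 (Real.rpow_nonneg h0.le t)

lemma SymTo.mono {n : ℕ} {k k' : ℝ} {f : E → F} (hf : SymTo n k f) (hk : k ≤ k') :
    SymTo n k' f := by
  obtain ⟨hs, C, hC, hb⟩ := hf
  refine ⟨hs, 2 ^ (k' - k) * C, by positivity, fun i hi ξ hξ => ?_⟩
  calc ‖iteratedFDerivWithin ℝ i f (U E) ξ‖ ≤ C * ‖ξ‖ ^ (k - i) := hb i hi ξ hξ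
    _ ≤ C * (2 ^ (k' - k) * ‖ξ‖ ^ (k' - i)) := by
        apply mul_le_mul_of_nonneg_left _ hC.le
        have := rpow_exp_le hξ (show k - i ≤ k' - i by linarith)
        calc ‖ξ‖ ^ (k - i) ≤ 2 ^ ((k' - i) - (k - i)) * ‖ξ‖ ^ (k' - i) := this
          _ = 2 ^ (k' - k) * ‖ξ‖ ^ (k' - i) := by ring_nf
    _ = 2 ^ (k' - k) * C * ‖ξ‖ ^ (k' - i) := by ring

lemma Sym.mono {k k' : ℝ} {f : E → F} (hf : Sym k f) (hk : k ≤ k') : Sym k' f :=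
  fun n => (hf n).mono hk

lemma SymTo.congr {n : ℕ} {k : ℝ} {f g : E → F} (h : EqOn f g (U E)) (hf : SymTo n k f) :
    SymTo n k g := by
  obtain ⟨hs, C, hC, hb⟩ := hf
  refine ⟨hs.congr fun ξ hξ => (h hξ).symm, C, hC, fun i hi ξ hξ => ?_⟩
  rw [iteratedFDerivWithin_congr h.symm hξ i]
  exact hb i hi ξ hξ

lemma Sym.congr {k : ℝ} {f g : E → F} (h : EqOn f g (U E)) (hf : Sym k f) : Sym k g :=
  fun n => (hf n).congr h

lemma SymTo.neg {n : ℕ} {k : ℝ} {f : E → F} (hf : SymTo n k f) :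
    SymTo n k fun ξ => -(f ξ) := by
  obtain ⟨hs, C, hC, hb⟩ := hf
  refine ⟨hs.neg, C, hC, fun i hi ξ hξ => ?_⟩
  have h1 : (fun ξ => -(f ξ)) = -f := rfl
  rw [h1, iteratedFDerivWithin_neg_apply udo hξ, norm_neg]
  exact hb i hi ξ hξ

lemma symTo_const {n : ℕ} (c : F) : SymTo (E := E) n 0 fun _ => c := by
  refine ⟨contDiffOn_const, ‖c‖ + 1, by positivity, fun i hi ξ hξ => ?_⟩
  match i with
  | 0 =>
    rw [norm_iteratedFDerivWithin_zero]
    have : ((0:ℝ) - ((0:ℕ):ℝ)) = 0 := by norm_num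
    rw [this, Real.rpow_zero, mul_one]
    linarith
  | (j + 1) =>
    rw [iteratedFDerivWithin_const_of_ne (Nat.succ_ne_zero j) c (U E)]
    have h0 := U_pos hξ
    have : (0:ℝ) < (‖c‖ + 1) * ‖ξ‖ ^ ((0:ℝ) - ((j+1:ℕ):ℝ)) := by positivity
    simpa using this.le

lemma sym_const (c : F) : Sym (E := E) 0 fun _ => c := fun n => symTo_const c

lemma norm_succ {f : E → F} {g : E → E →L[ℝ] F}
    (hfg : ∀ ξ ∈ U E, HasFDerivAt f (g ξ) ξ) {n : ℕ} {ξ : E} (hξ : ξ ∈ U E) :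
    ‖iteratedFDerivWithin ℝ (n + 1) f (U E) ξ‖ = ‖iteratedFDerivWithin ℝ n g (U E) ξ‖ := by
  rw [← norm_iteratedFDerivWithin_fderivWithin udo hξ]
  congr 1
  refine iteratedFDerivWithin_congr (fun ζ hζ => ?_) hξ n
  rw [fderivWithin_of_isOpen isOpen_U hζ]
  exact (hfg ζ hζ).fderiv


lemma natCast_le_infty (i : ℕ) : ((i : ℕ) : WithTop ℕ∞) ≤ ∞ := by exact_mod_cast le_top

lemma symTo_clm {n : ℕ} (c : E →L[ℝ] F) : SymTo n 1 fun ξ => c ξ := by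
  refine ⟨c.contDiff.contDiffOn, ‖c‖ + 1, by positivity, fun i hi ξ hξ => ?_⟩
  have h0 : (0:ℝ) < ‖ξ‖ := U_pos hξ
  have hc : ∀ ζ ∈ U E, HasFDerivAt (fun x => c x) ((fun _ : E => c) ζ) ζ :=
    fun ζ _ => c.hasFDerivAt
  match i with
  | 0 =>
    rw [norm_iteratedFDerivWithin_zero]
    have h1 : ((1:ℝ) - ((0:ℕ):ℝ)) = 1 := by norm_num
    rw [h1, Real.rpow_one]
    calc ‖c ξ‖ ≤ ‖c‖ * ‖ξ‖ := c.le_opNorm ξ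
      _ ≤ (‖c‖ + 1) * ‖ξ‖ := by nlinarith
  | 1 =>
    rw [norm_succ hc hξ, norm_iteratedFDerivWithin_zero]
    have h1 : ((1:ℝ) - ((1:ℕ):ℝ)) = 0 := by norm_num
    rw [h1, Real.rpow_zero, mul_one]
    linarith
  | (j + 2) =>
    rw [norm_succ hc hξ,
      iteratedFDerivWithin_const_of_ne (Nat.succ_ne_zero j) (c : E →L[ℝ] F) (U E)]
    have : (0:ℝ) < (‖c‖ + 1) * ‖ξ‖ ^ ((1:ℝ) - ((j+2:ℕ):ℝ)) := by positivity
    simpa using this.le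

lemma sym_clm (c : E →L[ℝ] F) : Sym 1 fun ξ => c ξ := fun n => symTo_clm c

lemma SymTo.bilin {n : ℕ} {k l : ℝ} {f : E → F} {g : E → G} (B : F →L[ℝ] G →L[ℝ] H)
    (hf : SymTo n k f) (hg : SymTo n l g) : SymTo n (k + l) fun ξ => B (f ξ) (g ξ) := by
  obtain ⟨hfs, C1, hC1, hb1⟩ := hf
  obtain ⟨hgs, C2, hC2, hb2⟩ := hg
  refine ⟨B.isBoundedBilinearMap.contDiff.comp₂_contDiffOn hfs hgs,
    (‖B‖ + 1) * 2 ^ n * C1 * C2, by positivity, fun i hi ξ hξ => ?_⟩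
  have h0 : (0:ℝ) < ‖ξ‖ := U_pos hξ
  have key := B.norm_iteratedFDerivWithin_le_of_bilinear hfs hgs udo hξ
    (natCast_le_infty i)
  refine key.trans ?_
  have step1 : ∀ j ∈ Finset.range (i + 1),
      (i.choose j : ℝ) * ‖iteratedFDerivWithin ℝ j f (U E) ξ‖ *
        ‖iteratedFDerivWithin ℝ (i - j) g (U E) ξ‖ ≤
      (i.choose j : ℝ) * (C1 * C2 * ‖ξ‖ ^ (k + l - i)) := by
    intro j hj
    have hj' : j ≤ i := Nat.lt_succ_iff.mp (Finset.mem_range.mp hj)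
    have e1 := hb1 j (le_trans hj' hi) ξ hξ
    have e2 := hb2 (i - j) (le_trans (Nat.sub_le i j) hi) ξ hξ
    have hprod : ‖iteratedFDerivWithin ℝ j f (U E) ξ‖ *
        ‖iteratedFDerivWithin ℝ (i - j) g (U E) ξ‖ ≤ C1 * C2 * ‖ξ‖ ^ (k + l - i) := by
      have h3 := mul_le_mul e1 e2 (norm_nonneg _) (by positivity)
      have hcast : (((i - j : ℕ)) : ℝ) = (i : ℝ) - (j : ℝ) := by
        rw [Nat.cast_sub hj']
      have hexp : C1 * ‖ξ‖ ^ (k - j) * (C2 * ‖ξ‖ ^ (l - ((i - j : ℕ) : ℝ)))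
          = C1 * C2 * ‖ξ‖ ^ (k + l - i) := by
        rw [hcast]
        rw [show C1 * ‖ξ‖ ^ (k - (j:ℝ)) * (C2 * ‖ξ‖ ^ (l - ((i:ℝ) - (j:ℝ))))
          = C1 * C2 * (‖ξ‖ ^ (k - (j:ℝ)) * ‖ξ‖ ^ (l - ((i:ℝ) - (j:ℝ)))) by ring]
        rw [← Real.rpow_add h0]
        ring_nf
      rw [hexp] at h3
      exact h3
    rw [mul_assoc, mul_assoc]
    exact mul_le_mul_of_nonneg_left (hprod.trans (le_of_eq (by ring))) (by positivity)
  have step2 : ∑ j ∈ Finset.range (i + 1),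
      (i.choose j : ℝ) * ‖iteratedFDerivWithin ℝ j f (U E) ξ‖ *
        ‖iteratedFDerivWithin ℝ (i - j) g (U E) ξ‖ ≤
      (2:ℝ) ^ i * (C1 * C2 * ‖ξ‖ ^ (k + l - i)) := by
    calc ∑ j ∈ Finset.range (i + 1), (i.choose j : ℝ) *
          ‖iteratedFDerivWithin ℝ j f (U E) ξ‖ *
          ‖iteratedFDerivWithin ℝ (i - j) g (U E) ξ‖
        ≤ ∑ j ∈ Finset.range (i + 1), (i.choose j : ℝ) * (C1 * C2 * ‖ξ‖ ^ (k + l - i)) :=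
          Finset.sum_le_sum step1
      _ = (∑ j ∈ Finset.range (i + 1), (i.choose j : ℝ)) * (C1 * C2 * ‖ξ‖ ^ (k + l - i)) := by
          rw [← Finset.sum_mul]
      _ = (2:ℝ) ^ i * (C1 * C2 * ‖ξ‖ ^ (k + l - i)) := by
          congr 1
          exact_mod_cast Nat.sum_range_choose i
  calc ‖B‖ * ∑ j ∈ Finset.range (i + 1), (i.choose j : ℝ) *
        ‖iteratedFDerivWithin ℝ j f (U E) ξ‖ *
        ‖iteratedFDerivWithin ℝ (i - j) g (U E) ξ‖
      ≤ ‖B‖ * ((2:ℝ) ^ i * (C1 * C2 * ‖ξ‖ ^ (k + l - i))) := by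
        apply mul_le_mul_of_nonneg_left step2 (norm_nonneg B)
    _ ≤ (‖B‖ + 1) * ((2:ℝ) ^ n * (C1 * C2 * ‖ξ‖ ^ (k + l - i))) := by
        have h2 : (2:ℝ) ^ i ≤ 2 ^ n := pow_le_pow_right₀ (by norm_num) hi
        have hX : (0:ℝ) ≤ C1 * C2 * ‖ξ‖ ^ (k + l - i) := by positivity
        have hB : ‖B‖ ≤ ‖B‖ + 1 := by linarith [norm_nonneg B]
        apply mul_le_mul hB _ (by positivity) (by positivity)
        exact mul_le_mul_of_nonneg_right h2 hX
    _ = (‖B‖ + 1) * 2 ^ n * C1 * C2 * ‖ξ‖ ^ (k + l - i) := by ring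

lemma Sym.bilin {k l : ℝ} {f : E → F} {g : E → G} (B : F →L[ℝ] G →L[ℝ] H)
    (hf : Sym k f) (hg : Sym l g) : Sym (k + l) fun ξ => B (f ξ) (g ξ) :=
  fun n => SymTo.bilin B (hf n) (hg n)

lemma SymTo.mul {n : ℕ} {k l : ℝ} {f g : E → ℝ} (hf : SymTo n k f) (hg : SymTo n l g) :
    SymTo n (k + l) fun ξ => f ξ * g ξ :=
  SymTo.bilin (ContinuousLinearMap.mul ℝ ℝ) hf hg

lemma Sym.mul {k l : ℝ} {f g : E → ℝ} (hf : Sym k f) (hg : Sym l g) :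
    Sym (k + l) fun ξ => f ξ * g ξ := fun n => (hf n).mul (hg n)

lemma SymTo.smul {n : ℕ} {k l : ℝ} {f : E → ℝ} {g : E → F} (hf : SymTo n k f)
    (hg : SymTo n l g) : SymTo n (k + l) fun ξ => f ξ • g ξ :=
  SymTo.bilin (ContinuousLinearMap.lsmul ℝ ℝ) hf hg

lemma Sym.smul {k l : ℝ} {f : E → ℝ} {g : E → F} (hf : Sym k f) (hg : Sym l g) :
    Sym (k + l) fun ξ => f ξ • g ξ := fun n => (hf n).smul (hg n)

lemma SymTo.add {n : ℕ} {k : ℝ} {f g : E → F} (hf : SymTo n k f) (hg : SymTo n k g) :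
    SymTo n k fun ξ => f ξ + g ξ := by
  obtain ⟨hfs, C1, hC1, hb1⟩ := hf
  obtain ⟨hgs, C2, hC2, hb2⟩ := hg
  refine ⟨hfs.add hgs, C1 + C2, by positivity, fun i hi ξ hξ => ?_⟩
  rw [iteratedFDerivWithin_add_apply' (hfs.of_le (natCast_le_infty i) ξ hξ)
    (hgs.of_le (natCast_le_infty i) ξ hξ) udo hξ]
  calc ‖iteratedFDerivWithin ℝ i f (U E) ξ + iteratedFDerivWithin ℝ i g (U E) ξ‖
      ≤ ‖iteratedFDerivWithin ℝ i f (U E) ξ‖ + ‖iteratedFDerivWithin ℝ i g (U E) ξ‖ :=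
        norm_add_le _ _
    _ ≤ C1 * ‖ξ‖ ^ (k - i) + C2 * ‖ξ‖ ^ (k - i) := add_le_add (hb1 i hi ξ hξ) (hb2 i hi ξ hξ)
    _ = (C1 + C2) * ‖ξ‖ ^ (k - i) := by ring

lemma Sym.add {k : ℝ} {f g : E → F} (hf : Sym k f) (hg : Sym k g) :
    Sym k fun ξ => f ξ + g ξ := fun n => (hf n).add (hg n)

lemma SymTo.step {n : ℕ} {k : ℝ} {f : E → F} {g : E → E →L[ℝ] F}
    (hsm : ContDiffOn ℝ ∞ f (U E))
    (hd : ∀ ξ ∈ U E, HasFDerivAt f (g ξ) ξ)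
    (h0 : ∃ C0 : ℝ, 0 < C0 ∧ ∀ ξ ∈ U E, ‖f ξ‖ ≤ C0 * ‖ξ‖ ^ k)
    (hg : SymTo n (k - 1) g) : SymTo (n + 1) k f := by
  obtain ⟨C0, hC0, hb0⟩ := h0
  obtain ⟨-, C1, hC1, hb1⟩ := hg
  refine ⟨hsm, C0 + C1, by positivity, fun i hi ξ hξ => ?_⟩
  have h0' : (0:ℝ) < ‖ξ‖ := U_pos hξ
  match i with
  | 0 =>
    rw [norm_iteratedFDerivWithin_zero]
    have h1 : (k - ((0:ℕ):ℝ)) = k := by norm_num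
    rw [h1]
    calc ‖f ξ‖ ≤ C0 * ‖ξ‖ ^ k := hb0 ξ hξ
      _ ≤ (C0 + C1) * ‖ξ‖ ^ k :=
          mul_le_mul_of_nonneg_right (by linarith) (Real.rpow_nonneg h0'.le k)
  | (j + 1) =>
    rw [norm_succ hd hξ]
    have hj : j ≤ n := Nat.succ_le_succ_iff.mp hi
    have he : k - 1 - (j:ℝ) = k - ((j+1:ℕ):ℝ) := by push_cast; ring
    calc ‖iteratedFDerivWithin ℝ j g (U E) ξ‖ ≤ C1 * ‖ξ‖ ^ (k - 1 - j) := hb1 j hj ξ hξ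
      _ = C1 * ‖ξ‖ ^ (k - ((j+1:ℕ):ℝ)) := by rw [he]
      _ ≤ (C0 + C1) * ‖ξ‖ ^ (k - ((j+1:ℕ):ℝ)) :=
          mul_le_mul_of_nonneg_right (by linarith) (Real.rpow_nonneg h0'.le _)

lemma SymTo.fderivW {n : ℕ} {k : ℝ} {v : E → F} (hv : SymTo (n + 1) k v) :
    SymTo n (k - 1) (fderivWithin ℝ v (U E)) := by
  obtain ⟨hs, C, hC, hb⟩ := hv
  refine ⟨hs.fderivWithin udo (by simp), C, hC, fun i hi ξ hξ => ?_⟩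
  rw [norm_iteratedFDerivWithin_fderivWithin udo hξ]
  have h1 := hb (i + 1) (Nat.succ_le_succ hi) ξ hξ
  have he : k - ((i+1:ℕ):ℝ) = k - 1 - (i:ℝ) := by push_cast; ring
  rwa [he] at h1

lemma hasFDerivAt_of_contDiffOn {v : E → F} (hv : ContDiffOn ℝ ∞ v (U E)) {ξ : E}
    (hξ : ξ ∈ U E) : HasFDerivAt v (fderivWithin ℝ v (U E) ξ) ξ := by
  rw [fderivWithin_of_isOpen isOpen_U hξ]
  exact ((hv.differentiableOn (by simp)).differentiableAt
    (isOpen_U.mem_nhds hξ)).hasFDerivAt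

lemma Sym.inv {v : E → ℝ} {k δ : ℝ} (hv : Sym k v) (hδ : 0 < δ)
    (hlow : ∀ ξ ∈ U E, δ * ‖ξ‖ ^ k ≤ v ξ) : Sym (-k) fun ξ => (v ξ)⁻¹ := by
  have hpos : ∀ ξ ∈ U E, 0 < v ξ := fun ξ hξ =>
    lt_of_lt_of_le (by have := U_pos hξ; positivity) (hlow ξ hξ)
  have hsm : ContDiffOn ℝ ∞ (fun ξ => (v ξ)⁻¹) (U E) :=
    (hv 0).1.inv fun ξ hξ => (hpos ξ hξ).ne'
  have h0 : ∀ ξ ∈ U E, ‖(v ξ)⁻¹‖ ≤ δ⁻¹ * ‖ξ‖ ^ (-k) := by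
    intro ξ hξ
    have hx := U_pos hξ
    have h1 : (v ξ)⁻¹ ≤ (δ * ‖ξ‖ ^ k)⁻¹ := by
      apply inv_anti₀ (by positivity) (hlow ξ hξ)
    rw [Real.norm_eq_abs, abs_of_pos (inv_pos.mpr (hpos ξ hξ))]
    calc (v ξ)⁻¹ ≤ (δ * ‖ξ‖ ^ k)⁻¹ := h1
      _ = δ⁻¹ * ‖ξ‖ ^ (-k) := by
          rw [mul_inv, Real.rpow_neg hx.le]
  have hw : ∀ ξ ∈ U E, HasFDerivAt (fun ζ => (v ζ)⁻¹)
      ((-((v ξ)⁻¹ * (v ξ)⁻¹)) • fderivWithin ℝ v (U E) ξ) ξ := by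
    intro ξ hξ
    have h := (hasDerivAt_inv (hpos ξ hξ).ne').comp_hasFDerivAt ξ
      (hasFDerivAt_of_contDiffOn (hv 0).1 hξ)
    have hsc : -((v ξ)⁻¹ * (v ξ)⁻¹) = -(v ξ ^ 2)⁻¹ := by rw [sq, mul_inv]
    rw [hsc]
    exact h
  intro n
  induction n with
  | zero =>
    refine ⟨hsm, δ⁻¹, inv_pos.mpr hδ, fun i hi ξ hξ => ?_⟩
    have : i = 0 := Nat.le_zero.mp hi
    subst this
    rw [norm_iteratedFDerivWithin_zero]
    have h1 : (-k - ((0:ℕ):ℝ)) = -k := by norm_num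
    rw [h1]
    exact h0 ξ hξ
  | succ n ih =>
    refine SymTo.step hsm hw ⟨δ⁻¹, inv_pos.mpr hδ, h0⟩ ?_
    have h1 : SymTo n (-k + -k) fun ξ => (v ξ)⁻¹ * (v ξ)⁻¹ := ih.mul ih
    have h2 := h1.neg
    have h3 : SymTo n (k - 1) (fderivWithin ℝ v (U E)) := (hv (n + 1)).fderivW
    have h4 := h2.smul h3
    have he : -k + -k + (k - 1) = -k - 1 := by ring
    rw [he] at h4
    exact h4

lemma hasFDerivAt_norm {ξ : E} (hξ : ξ ≠ 0) :
    HasFDerivAt (fun x : E => ‖x‖) (‖ξ‖⁻¹ • innerSL ℝ ξ) ξ := by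
  have hn0 : (0:ℝ) < ‖ξ‖ := norm_pos_iff.mpr hξ
  have hinner : (0:ℝ) < ⟪ξ, ξ⟫ := by
    rw [real_inner_self_eq_norm_mul_norm]; positivity
  have hq : HasFDerivAt (fun x : E => ⟪x, x⟫) ((2:ℝ) • innerSL ℝ ξ) ξ := by
    have h := (hasFDerivAt_id ξ).inner ℝ (hasFDerivAt_id ξ)
    refine h.congr_fderiv ?_
    symm
    ext y
    simp only [ContinuousLinearMap.smul_apply, innerSL_apply_apply, ContinuousLinearMap.coe_comp',
      Function.comp_apply, fderivInnerCLM_apply, ContinuousLinearMap.prod_apply,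
      ContinuousLinearMap.coe_id', id_eq, smul_eq_mul]
    rw [real_inner_comm y ξ]
    ring
  have hsqrt : HasDerivAt Real.sqrt (1 / (2 * ‖ξ‖)) ⟪ξ, ξ⟫ := by
    have h := Real.hasDerivAt_sqrt hinner.ne'
    have he : Real.sqrt ⟪ξ, ξ⟫ = ‖ξ‖ := by
      rw [real_inner_self_eq_norm_mul_norm, Real.sqrt_mul_self (norm_nonneg ξ)]
    rwa [he] at h
  have h := HasDerivAt.comp_hasFDerivAt (f := fun x : E => ⟪x, x⟫) ξ hsqrt hq
  have heq : (Real.sqrt ∘ fun x : E => ⟪x, x⟫) = fun x : E => ‖x‖ := by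
    funext x
    simp only [Function.comp_apply]
    rw [real_inner_self_eq_norm_mul_norm, Real.sqrt_mul_self (norm_nonneg x)]
  rw [heq] at h
  have hn : (0:ℝ) < ‖ξ‖ := norm_pos_iff.mpr hξ
  have hsc : (1 / (2 * ‖ξ‖)) • ((2:ℝ) • innerSL ℝ ξ) = ‖ξ‖⁻¹ • innerSL ℝ ξ := by
    rw [smul_smul]
    congr 1
    field_simp
  rwa [hsc] at h

lemma contDiffOn_norm' : ContDiffOn ℝ ∞ (fun x : E => ‖x‖) (U E) := by
  have h : ContDiffOn ℝ ∞ (fun x : E => ‖id x‖) (U E) :=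
    ContDiffOn.norm ℝ contDiffOn_id fun ξ hξ => U_ne hξ
  simpa using h

lemma sym_inv_norm : Sym (E := E) (-1) fun ξ => ‖ξ‖⁻¹ := by
  have hsm : ContDiffOn ℝ ∞ (fun ξ : E => ‖ξ‖⁻¹) (U E) :=
    contDiffOn_norm'.inv fun ξ hξ => (U_pos hξ).ne'
  have h0 : ∀ ξ ∈ U E, ‖(‖ξ‖⁻¹ : ℝ)‖ ≤ 1 * ‖ξ‖ ^ (-1:ℝ) := by
    intro ξ hξ
    have hx := U_pos hξ
    rw [Real.norm_eq_abs, abs_of_pos (inv_pos.mpr hx), Real.rpow_neg_one, one_mul]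
  have hd : ∀ ξ ∈ U E, HasFDerivAt (fun ζ : E => ‖ζ‖⁻¹)
      ((-(‖ξ‖⁻¹ * ‖ξ‖⁻¹ * ‖ξ‖⁻¹)) • innerSL ℝ ξ) ξ := by
    intro ξ hξ
    have hx := U_pos hξ
    have h := (hasDerivAt_inv hx.ne').comp_hasFDerivAt ξ (hasFDerivAt_norm (U_ne hξ))
    have hsc : (-(‖ξ‖ ^ 2)⁻¹) • (‖ξ‖⁻¹ • innerSL ℝ ξ)
        = (-(‖ξ‖⁻¹ * ‖ξ‖⁻¹ * ‖ξ‖⁻¹)) • innerSL ℝ ξ := by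
      rw [smul_smul]
      congr 1
      rw [sq, mul_inv]
      ring
    rwa [hsc] at h
  intro n
  induction n with
  | zero =>
    refine ⟨hsm, 1, one_pos, fun i hi ξ hξ => ?_⟩
    have : i = 0 := Nat.le_zero.mp hi
    subst this
    rw [norm_iteratedFDerivWithin_zero]
    have h1 : ((-1:ℝ) - ((0:ℕ):ℝ)) = -1 := by norm_num
    rw [h1]
    exact h0 ξ hξ
  | succ n ih =>
    refine SymTo.step hsm hd ⟨1, one_pos, h0⟩ ?_
    have h1 : SymTo n (-1 + -1 + -1) fun ξ : E => ‖ξ‖⁻¹ * ‖ξ‖⁻¹ * ‖ξ‖⁻¹ := (ih.mul ih).mul ih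
    have h2 := (h1.neg).smul (symTo_clm (innerSL ℝ (E := E)))
    have he : -1 + -1 + -1 + 1 = (-1:ℝ) - 1 := by ring
    rw [he] at h2
    exact h2

lemma sym_normsq : Sym (E := E) 2 fun ξ => ‖ξ‖ ^ 2 := by
  have h1 : Sym (E := E) (1 + 1) fun ξ => (innerSL ℝ) ((ContinuousLinearMap.id ℝ E) ξ)
      ((ContinuousLinearMap.id ℝ E) ξ) :=
    Sym.bilin (innerSL ℝ) (sym_clm (ContinuousLinearMap.id ℝ E))
      (sym_clm (ContinuousLinearMap.id ℝ E))
  have h2 : Sym (E := E) 2 fun ξ => ⟪ξ, ξ⟫ := by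
    have he : (1 + 1 : ℝ) = 2 := by norm_num
    rw [he] at h1
    exact h1
  exact h2.congr fun ξ hξ => real_inner_self_eq_norm_sq ξ

lemma sym_norm : Sym (E := E) 1 fun ξ => ‖ξ‖ := by
  have h1 : Sym (E := E) (2 + -1) fun ξ => ‖ξ‖ ^ 2 * ‖ξ‖⁻¹ := sym_normsq.mul sym_inv_norm
  have he : (2 + -1 : ℝ) = 1 := by norm_num
  rw [he] at h1
  refine h1.congr fun ξ hξ => ?_
  have hx := U_pos hξ
  field_simp

lemma hasDerivAt_tanh (y : ℝ) :
    HasDerivAt Real.tanh ((Real.cosh y ^ 2)⁻¹) y := by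
  have h := (Real.hasDerivAt_sinh y).div (Real.hasDerivAt_cosh y) (Real.cosh_pos y).ne'
  have hfun : (Real.sinh / Real.cosh) = Real.tanh := by
    funext x
    rw [Pi.div_apply, Real.tanh_eq_sinh_div_cosh]
  have hval : (Real.cosh y * Real.cosh y - Real.sinh y * Real.sinh y) / Real.cosh y ^ 2
      = (Real.cosh y ^ 2)⁻¹ := by
    rw [← sq, ← sq, Real.cosh_sq_sub_sinh_sq, one_div]
  rwa [hfun, hval] at h

lemma contDiff_tanh : ContDiff ℝ ∞ Real.tanh := by
  have h : Real.tanh = fun x => Real.sinh x / Real.cosh x := by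
    funext x
    rw [Real.tanh_eq_sinh_div_cosh]
  rw [h]
  exact Real.contDiff_sinh.div Real.contDiff_cosh fun x => (Real.cosh_pos x).ne'

lemma tanh_monotone : Monotone Real.tanh := by
  have h : ∀ x : ℝ, 0 < deriv Real.tanh x := by
    intro x
    rw [(hasDerivAt_tanh x).deriv]
    exact inv_pos.mpr (pow_pos (Real.cosh_pos x) 2)
  exact (strictMono_of_deriv_pos h).monotone

lemma tanh_pos {x : ℝ} (hx : 0 < x) : 0 < Real.tanh x := by
  rw [Real.tanh_eq_sinh_div_cosh]
  exact div_pos (Real.sinh_pos_iff.mpr hx) (Real.cosh_pos x)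

lemma abs_tanh_le_one (y : ℝ) : |Real.tanh y| ≤ 1 := by
  rw [Real.tanh_eq_sinh_div_cosh, abs_div, abs_of_pos (Real.cosh_pos y),
    div_le_one (Real.cosh_pos y)]
  nlinarith [Real.cosh_sq_sub_sinh_sq y, sq_abs (Real.sinh y), abs_nonneg (Real.sinh y),
    Real.cosh_pos y]

lemma cosh_lower (b : ℝ) (hb : 0 < b) (N : ℕ) {ξ : E} (hξ : ξ ∈ U E) :
    ‖ξ‖ ^ (N : ℝ) ≤ (2 * (N.factorial : ℝ) / b ^ N) * Real.cosh (b * ‖ξ‖) ^ 2 := by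
  have hx := U_pos hξ
  set t := b * ‖ξ‖ with ht
  have htpos : 0 < t := by positivity
  have h1 : t ^ N / (N.factorial : ℝ) ≤ Real.exp t := Real.pow_div_factorial_le_exp t htpos.le N
  have h2 : Real.exp t ≤ 2 * Real.cosh t := by
    rw [Real.cosh_eq]
    have := Real.exp_pos (-t)
    linarith
  have h3 : Real.cosh t ≤ Real.cosh t ^ 2 := by
    nlinarith [Real.one_le_cosh t]
  have hfac : (0:ℝ) < (N.factorial : ℝ) := by positivity
  have h4 : t ^ N ≤ 2 * (N.factorial : ℝ) * Real.cosh t ^ 2 := by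
    have := (div_le_iff₀ hfac).mp h1
    nlinarith [Real.cosh_pos t]
  have h5 : ‖ξ‖ ^ (N : ℝ) = ‖ξ‖ ^ N := Real.rpow_natCast ‖ξ‖ N
  rw [h5]
  have h6 : t ^ N = b ^ N * ‖ξ‖ ^ N := by
    rw [ht, mul_pow]
  have hbN : (0:ℝ) < b ^ N := by positivity
  rw [h6] at h4
  calc ‖ξ‖ ^ N = (b ^ N * ‖ξ‖ ^ N) / b ^ N := by field_simp
    _ ≤ (2 * (N.factorial : ℝ) * Real.cosh t ^ 2) / b ^ N := by
        gcongr
    _ = (2 * (N.factorial : ℝ) / b ^ N) * Real.cosh t ^ 2 := by ring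

lemma rho_le (b : ℝ) (hb : 0 < b) (N : ℕ) {ξ : E} (hξ : ξ ∈ U E) :
    ‖((Real.cosh (b * ‖ξ‖) ^ 2)⁻¹ : ℝ)‖ ≤
      (2 * (N.factorial : ℝ) / b ^ N) * ‖ξ‖ ^ (-(N:ℝ)) := by
  have hx := U_pos hξ
  have hC : (0:ℝ) < 2 * (N.factorial : ℝ) / b ^ N := by positivity
  have hcosh : (0:ℝ) < Real.cosh (b * ‖ξ‖) ^ 2 := pow_pos (Real.cosh_pos _) 2
  have h := cosh_lower b hb N hξ
  have h' : ‖ξ‖ ^ (N:ℝ) / (2 * (N.factorial : ℝ) / b ^ N) ≤ Real.cosh (b * ‖ξ‖) ^ 2 := by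
    rw [div_le_iff₀ hC]
    linarith [h]
  have h2 := inv_anti₀ (by positivity) h'
  rw [Real.norm_eq_abs, abs_of_pos (inv_pos.mpr hcosh)]
  calc (Real.cosh (b * ‖ξ‖) ^ 2)⁻¹
      ≤ (‖ξ‖ ^ (N:ℝ) / (2 * (N.factorial : ℝ) / b ^ N))⁻¹ := h2
    _ = (2 * (N.factorial : ℝ) / b ^ N) * (‖ξ‖ ^ (N:ℝ))⁻¹ := by
        rw [inv_div, div_eq_mul_inv]
    _ = (2 * (N.factorial : ℝ) / b ^ N) * ‖ξ‖ ^ (-(N:ℝ)) := by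
        rw [Real.rpow_neg hx.le]

lemma sym_tanh_rho (b : ℝ) (hb : 0 < b) :
    (Sym (E := E) 0 fun ξ => Real.tanh (b * ‖ξ‖)) ∧
      ∀ N : ℕ, Sym (E := E) (-(N:ℝ)) fun ξ => (Real.cosh (b * ‖ξ‖) ^ 2)⁻¹ := by
  have hbr : ContDiffOn ℝ ∞ (fun ξ : E => b * ‖ξ‖) (U E) :=
    contDiffOn_const.mul contDiffOn_norm'
  have hτsm : ContDiffOn ℝ ∞ (fun ξ : E => Real.tanh (b * ‖ξ‖)) (U E) :=
    contDiff_tanh.comp_contDiffOn hbr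
  have hρsm : ContDiffOn ℝ ∞ (fun ξ : E => (Real.cosh (b * ‖ξ‖) ^ 2)⁻¹) (U E) :=
    ((Real.contDiff_cosh.comp_contDiffOn hbr).pow 2).inv
      fun ξ hξ => (pow_pos (Real.cosh_pos _) 2).ne'
  have hτ0 : ∀ ξ ∈ U E, ‖(Real.tanh (b * ‖ξ‖) : ℝ)‖ ≤ 1 * ‖ξ‖ ^ (0:ℝ) := by
    intro ξ hξ
    rw [Real.rpow_zero, mul_one, Real.norm_eq_abs]
    exact abs_tanh_le_one _
  have hbderiv : ∀ ξ ∈ U E, HasFDerivAt (fun x : E => b * ‖x‖)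
      (b • (‖ξ‖⁻¹ • innerSL ℝ ξ)) ξ :=
    fun ξ hξ => (hasFDerivAt_norm (U_ne hξ)).const_mul b
  have hdτ : ∀ ξ ∈ U E, HasFDerivAt (fun x : E => Real.tanh (b * ‖x‖))
      ((b * (Real.cosh (b * ‖ξ‖) ^ 2)⁻¹ * ‖ξ‖⁻¹) • innerSL ℝ ξ) ξ := by
    intro ξ hξ
    have h2 := HasDerivAt.comp_hasFDerivAt (f := fun x : E => b * ‖x‖) ξ
      (hasDerivAt_tanh (b * ‖ξ‖)) (hbderiv ξ hξ)
    have hsc : (Real.cosh (b * ‖ξ‖) ^ 2)⁻¹ • (b • (‖ξ‖⁻¹ • innerSL ℝ ξ))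
        = (b * (Real.cosh (b * ‖ξ‖) ^ 2)⁻¹ * ‖ξ‖⁻¹) • innerSL ℝ ξ := by
      rw [smul_smul, smul_smul]
      congr 1
      ring
    rwa [hsc] at h2
  have hdρ : ∀ ξ ∈ U E, HasFDerivAt (fun x : E => (Real.cosh (b * ‖x‖) ^ 2)⁻¹)
      ((-(2 * b) * Real.tanh (b * ‖ξ‖) * (Real.cosh (b * ‖ξ‖) ^ 2)⁻¹ * ‖ξ‖⁻¹)
        • innerSL ℝ ξ) ξ := by
    intro ξ hξ
    set t := b * ‖ξ‖ with ht
    have hc := (Real.hasDerivAt_cosh t).pow (n := 2)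
    have hinv := hc.inv (pow_ne_zero 2 (Real.cosh_pos t).ne')
    have h2 := HasDerivAt.comp_hasFDerivAt (f := fun x : E => b * ‖x‖) ξ hinv (hbderiv ξ hξ)
    have hsc : (-((2:ℕ) * Real.cosh t ^ (2-1) * Real.sinh t) / (Real.cosh t ^ 2) ^ 2)
          • (b • (‖ξ‖⁻¹ • innerSL ℝ ξ))
        = (-(2 * b) * Real.tanh t * (Real.cosh t ^ 2)⁻¹ * ‖ξ‖⁻¹) • innerSL ℝ ξ := by
      rw [smul_smul, smul_smul]
      congr 1
      rw [Real.tanh_eq_sinh_div_cosh]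
      have hco : Real.cosh (b * ‖ξ‖) ≠ 0 := (Real.cosh_pos _).ne'
      have hcc : Real.cosh (b * ‖ξ‖) * (Real.cosh (b * ‖ξ‖))⁻¹ = 1 := mul_inv_cancel₀ hco
      field_simp [hco]
      rw [ht]
      ring
    rw [Pi.pow_apply] at h2
    rwa [hsc] at h2
  suffices h : ∀ n, (SymTo n 0 fun ξ : E => Real.tanh (b * ‖ξ‖)) ∧
      ∀ N : ℕ, SymTo n (-(N:ℝ)) fun ξ : E => (Real.cosh (b * ‖ξ‖) ^ 2)⁻¹ by
    exact ⟨fun n => (h n).1, fun N n => (h n).2 N⟩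
  intro n
  induction n with
  | zero =>
    constructor
    · refine ⟨hτsm, 1, one_pos, fun i hi ξ hξ => ?_⟩
      have hi0 : i = 0 := Nat.le_zero.mp hi
      subst hi0
      rw [norm_iteratedFDerivWithin_zero]
      have he : ((0:ℝ) - ((0:ℕ):ℝ)) = 0 := by norm_num
      rw [he]
      exact hτ0 ξ hξ
    · intro N
      refine ⟨hρsm, 2 * (N.factorial : ℝ) / b ^ N, by positivity, fun i hi ξ hξ => ?_⟩
      have hi0 : i = 0 := Nat.le_zero.mp hi
      subst hi0
      rw [norm_iteratedFDerivWithin_zero]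
      have he : (-(N:ℝ) - ((0:ℕ):ℝ)) = -(N:ℝ) := by norm_num
      rw [he]
      exact rho_le b hb N hξ
  | succ n ih =>
    obtain ⟨ihτ, ihρ⟩ := ih
    constructor
    · refine SymTo.step hτsm hdτ ⟨1, one_pos, fun ξ hξ => ?_⟩ ?_
      · have h := hτ0 ξ hξ
        have he : ‖ξ‖ ^ (0:ℝ) = 1 := Real.rpow_zero _
        rw [he] at h ⊢
        exact h
      · have hρ1 : SymTo n (-1:ℝ) fun ξ : E => (Real.cosh (b * ‖ξ‖) ^ 2)⁻¹ := by
          have h := ihρ 1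
          have he : (-(((1:ℕ)):ℝ)) = (-1:ℝ) := by norm_num
          rwa [he] at h
        have h1 := (symTo_const (E := E) b).mul hρ1
        have h2 := h1.mul (sym_inv_norm n)
        have h3 := h2.smul (symTo_clm (innerSL ℝ (E := E)))
        have he : (0 + -1 + -1 + 1 : ℝ) = 0 - 1 := by norm_num
        rwa [he] at h3
    · intro N
      refine SymTo.step hρsm hdρ
        ⟨2 * (N.factorial : ℝ) / b ^ N, by positivity, fun ξ hξ => rho_le b hb N hξ⟩ ?_
      have h1 := (symTo_const (E := E) (-(2 * b))).mul ihτ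
      have h2 := h1.mul (ihρ (N + 1))
      have h3 := h2.mul (sym_inv_norm n)
      have h4 := h3.smul (symTo_clm (innerSL ℝ (E := E)))
      have he : (0 + 0 + -(((N + 1 : ℕ)):ℝ) + -1 + 1 : ℝ) = -(N:ℝ) - 1 := by
        push_cast; ring
      rwa [he] at h4

lemma complex_inv_key (s : ℝ) : ((1:ℂ) + s • (-Complex.I))⁻¹
    = (1 + s * s)⁻¹ • (1:ℂ) + (s * (1 + s * s)⁻¹) • Complex.I := by
  have hs : (1:ℝ) + s * s ≠ 0 := by nlinarith [sq_nonneg s]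
  have hs' : ((1:ℂ) + (s:ℂ) * (s:ℂ)) ≠ 0 := by
    intro h
    apply hs
    have := congrArg Complex.re h
    simpa using this
  apply inv_eq_of_mul_eq_one_right
  simp only [Complex.real_smul]
  push_cast
  field_simp
  ring_nf
  rw [Complex.I_sq]
  ring
  have hs2 : (1:ℂ) + (s:ℂ) ^ 2 ≠ 0 := by rwa [sq]
  rw [← add_one_mul, add_comm, mul_inv_cancel₀ hs2]

end Stmt11Aux

/-- For `σ > 0`, `g ≥ 0`, `γ ≠ 0`, and `m(ξ) = |ξ|tanh(b|ξ|)` with `b > 0` (or `m(ξ) = |ξ|`),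
the symbol `a(ξ) = 1 - iγξ₁/((σ|ξ|² + g)m(ξ))` of `D_η𝓕(0,0)` is nonzero for `ξ ≠ 0`,
and both `a` and `1/a` satisfy the order-zero Mikhlin-type bounds
`|∂^β a(ξ)| ≤ C_β |ξ|^{-|β|}` for `|ξ| > 1/2`. -/
theorem stmt_11 (d : ℕ) (hd : 0 < d) (σ g γ b : ℝ)
    (hσ : 0 < σ) (hg : 0 ≤ g) (hγ : γ ≠ 0) (hb : 0 < b)
    (m : EuclideanSpace ℝ (Fin d) → ℝ)
    (hm : (∀ ξ, m ξ = ‖ξ‖ * Real.tanh (b * ‖ξ‖)) ∨ (∀ ξ, m ξ = ‖ξ‖))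
    (a : EuclideanSpace ℝ (Fin d) → ℂ)
    (ha : ∀ ξ, a ξ = 1 - Complex.I * ((γ * ξ ⟨0, hd⟩ : ℝ) : ℂ)
      / (((σ * ‖ξ‖ ^ 2 + g) * m ξ : ℝ) : ℂ)) :
    (∀ ξ, ξ ≠ 0 → a ξ ≠ 0) ∧
    ∀ n : ℕ, ∃ C : ℝ, 0 < C ∧
      ∀ ξ : EuclideanSpace ℝ (Fin d), 1 / 2 < ‖ξ‖ →
        ‖iteratedFDeriv ℝ n a ξ‖ ≤ C * ‖ξ‖ ^ (-(n : ℝ)) ∧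
        ‖iteratedFDeriv ℝ n (fun ζ => (a ζ)⁻¹) ξ‖ ≤ C * ‖ξ‖ ^ (-(n : ℝ)) := by
  open Stmt11Aux in
  constructor
  · intro ξ _ hc
    rw [ha ξ] at hc
    have hre := congrArg Complex.re hc
    simp [Complex.div_re, ← Complex.ofReal_pow, ← Complex.ofReal_mul,
      ← Complex.ofReal_add] at hre
  · set hfun : EuclideanSpace ℝ (Fin d) → ℝ := fun ξ => (σ * ‖ξ‖ ^ 2 + g) * m ξ with hhfun
    have hbase : Stmt11Aux.Sym 2 fun ξ : EuclideanSpace ℝ (Fin d) => σ * ‖ξ‖ ^ 2 + g := by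
      have h1 := (Stmt11Aux.sym_const (E := EuclideanSpace ℝ (Fin d)) σ).mul Stmt11Aux.sym_normsq
      have he : ((0:ℝ) + 2) = 2 := by norm_num
      rw [he] at h1
      exact h1.add ((Stmt11Aux.sym_const g).mono (by norm_num))
    have hm3 : Stmt11Aux.Sym 3 hfun ∧ ∃ δ : ℝ, 0 < δ ∧
        ∀ ξ ∈ Stmt11Aux.U (EuclideanSpace ℝ (Fin d)), δ * ‖ξ‖ ^ (3:ℝ) ≤ hfun ξ := by
      have hcube : ∀ ξ : EuclideanSpace ℝ (Fin d), ‖ξ‖ ^ (3:ℝ) = ‖ξ‖ ^ (3:ℕ) := fun ξ => by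
        rw [show (3:ℝ) = ((3:ℕ):ℝ) by norm_num, Real.rpow_natCast]
      cases hm with
      | inr hmr =>
        constructor
        · have h1 := hbase.mul Stmt11Aux.sym_norm
          have he : ((2:ℝ) + 1) = 3 := by norm_num
          rw [he] at h1
          exact h1.congr fun ξ _ => by rw [hhfun]; simp only []; rw [hmr ξ]
        · refine ⟨σ, hσ, fun ξ hξ => ?_⟩
          have hx := Stmt11Aux.U_pos hξ
          rw [hcube ξ, hhfun]
          simp only []
          rw [hmr ξ]
          nlinarith [hx]
      | inl hml =>
        have hτ := (Stmt11Aux.sym_tanh_rho (E := EuclideanSpace ℝ (Fin d)) b hb).1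
        constructor
        · have h1 := hbase.mul (Stmt11Aux.sym_norm.mul hτ)
          have he : ((2:ℝ) + (1 + 0)) = 3 := by norm_num
          rw [he] at h1
          exact h1.congr fun ξ _ => by rw [hhfun]; simp only []; rw [hml ξ]
        · refine ⟨σ * Real.tanh (b / 2),
            mul_pos hσ (Stmt11Aux.tanh_pos (by positivity)), fun ξ hξ => ?_⟩
          have hx := Stmt11Aux.U_pos hξ
          have hx2 := Stmt11Aux.U_half hξ
          have h1 : Real.tanh (b / 2) ≤ Real.tanh (b * ‖ξ‖) :=
            Stmt11Aux.tanh_monotone (by nlinarith)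
          have h2 : (0:ℝ) < Real.tanh (b / 2) := Stmt11Aux.tanh_pos (by positivity)
          rw [hcube ξ, hhfun]
          simp only []
          rw [hml ξ]
          have hB : ‖ξ‖ * Real.tanh (b / 2) ≤ ‖ξ‖ * Real.tanh (b * ‖ξ‖) :=
            mul_le_mul_of_nonneg_left h1 hx.le
          calc σ * Real.tanh (b / 2) * ‖ξ‖ ^ 3
              = (σ * ‖ξ‖ ^ 2) * (‖ξ‖ * Real.tanh (b / 2)) := by ring
            _ ≤ (σ * ‖ξ‖ ^ 2 + g) * (‖ξ‖ * Real.tanh (b * ‖ξ‖)) :=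
                mul_le_mul (by linarith) hB (mul_nonneg hx.le h2.le) (by positivity)
    obtain ⟨hsym3, δ, hδ, hlow⟩ := hm3
    have hinv : Stmt11Aux.Sym (-3) fun ξ => (hfun ξ)⁻¹ := hsym3.inv hδ hlow
    have hproj : Stmt11Aux.Sym 1 fun ξ : EuclideanSpace ℝ (Fin d) => (ξ ⟨0, hd⟩ : ℝ) :=
      Stmt11Aux.sym_clm (EuclideanSpace.proj (⟨0, hd⟩ : Fin d))
    set t : EuclideanSpace ℝ (Fin d) → ℝ := fun ξ => γ * (ξ ⟨0, hd⟩) * (hfun ξ)⁻¹ with htdef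
    have ht : Stmt11Aux.Sym (-2) t := by
      have h1 := ((Stmt11Aux.sym_const γ).mul hproj).mul hinv
      have he : ((0:ℝ) + 1 + -3) = -2 := by norm_num
      rw [he] at h1
      exact h1
    have ht0 : Stmt11Aux.Sym 0 t := ht.mono (by norm_num)
    have hv : Stmt11Aux.Sym 0 fun ξ => 1 + t ξ * t ξ := by
      have h1 := (ht.mul ht).mono (show (-2:ℝ) + -2 ≤ 0 by norm_num)
      exact (Stmt11Aux.sym_const (1:ℝ)).add h1
    have hvlow : ∀ ξ ∈ Stmt11Aux.U (EuclideanSpace ℝ (Fin d)), (1:ℝ) * ‖ξ‖ ^ (0:ℝ) ≤ 1 + t ξ * t ξ := by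
      intro ξ hξ
      rw [Real.rpow_zero, mul_one]
      nlinarith [sq_nonneg (t ξ)]
    have hW : Stmt11Aux.Sym 0 fun ξ => (1 + t ξ * t ξ)⁻¹ := by
      have h1 := hv.inv one_pos hvlow
      rwa [neg_zero] at h1
    have hA : Stmt11Aux.Sym 0 fun ξ : EuclideanSpace ℝ (Fin d) => (1:ℂ) + t ξ • (-Complex.I) := by
      have h1 := ht0.smul (Stmt11Aux.sym_const (-Complex.I))
      have he : ((0:ℝ) + 0) = 0 := by norm_num
      rw [he] at h1
      exact (Stmt11Aux.sym_const (1:ℂ)).add h1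
    have hAinv : Stmt11Aux.Sym 0 fun ξ : EuclideanSpace ℝ (Fin d) =>
        (1 + t ξ * t ξ)⁻¹ • (1:ℂ) + (t ξ * (1 + t ξ * t ξ)⁻¹) • Complex.I := by
      have h1 := hW.smul (Stmt11Aux.sym_const (1:ℂ))
      have h2 := (ht0.mul hW).smul (Stmt11Aux.sym_const Complex.I)
      have he : ((0:ℝ) + 0) = 0 := by norm_num
      rw [he] at h1
      have he2 : ((0:ℝ) + 0 + 0) = 0 := by norm_num
      rw [he, he] at h2
      exact h1.add h2
    have haA : Set.EqOn a (fun ξ : EuclideanSpace ℝ (Fin d) => (1:ℂ) + t ξ • (-Complex.I)) (Stmt11Aux.U (EuclideanSpace ℝ (Fin d))) := by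
      intro ξ hξ
      rw [ha ξ]
      simp only [Complex.real_smul, htdef, hhfun]
      push_cast
      ring
    have haAinv : Set.EqOn (fun ζ => (a ζ)⁻¹)
        (fun ξ : EuclideanSpace ℝ (Fin d) => (1 + t ξ * t ξ)⁻¹ • (1:ℂ) + (t ξ * (1 + t ξ * t ξ)⁻¹) • Complex.I)
        (Stmt11Aux.U (EuclideanSpace ℝ (Fin d))) := by
      intro ξ hξ
      have h1 : a ξ = (1:ℂ) + t ξ • (-Complex.I) := haA hξ
      simp only []
      rw [h1, Stmt11Aux.complex_inv_key (t ξ)]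
    intro n
    obtain ⟨-, C1, hC1, hb1⟩ := hA n
    obtain ⟨-, C2, hC2, hb2⟩ := hAinv n
    refine ⟨C1 + C2, by positivity, fun ξ hξ' => ?_⟩
    have hξ : ξ ∈ Stmt11Aux.U (EuclideanSpace ℝ (Fin d)) := hξ'
    have hrp : (0:ℝ) ≤ ‖ξ‖ ^ (-(n:ℝ)) := Real.rpow_nonneg (norm_nonneg ξ) _
    have hzs : (0:ℝ) - (n:ℕ) = -(n:ℝ) := by push_cast; ring
    constructor
    · have e1 : iteratedFDeriv ℝ n a ξ = iteratedFDerivWithin ℝ n a (Stmt11Aux.U (EuclideanSpace ℝ (Fin d))) ξ :=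
        (iteratedFDerivWithin_of_isOpen n Stmt11Aux.isOpen_U hξ).symm
      rw [e1, iteratedFDerivWithin_congr haA hξ n]
      have h := hb1 n le_rfl ξ hξ
      rw [hzs] at h
      calc ‖iteratedFDerivWithin ℝ n (fun ξ : EuclideanSpace ℝ (Fin d) => (1:ℂ) + t ξ • (-Complex.I))
            (Stmt11Aux.U (EuclideanSpace ℝ (Fin d))) ξ‖ ≤ C1 * ‖ξ‖ ^ (-(n:ℝ)) := h
        _ ≤ (C1 + C2) * ‖ξ‖ ^ (-(n:ℝ)) := mul_le_mul_of_nonneg_right (by linarith) hrp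
    · have e1 : iteratedFDeriv ℝ n (fun ζ => (a ζ)⁻¹) ξ
          = iteratedFDerivWithin ℝ n (fun ζ => (a ζ)⁻¹) (Stmt11Aux.U (EuclideanSpace ℝ (Fin d))) ξ :=
        (iteratedFDerivWithin_of_isOpen n Stmt11Aux.isOpen_U hξ).symm
      rw [e1, iteratedFDerivWithin_congr haAinv hξ n]
      have h := hb2 n le_rfl ξ hξ
      rw [hzs] at h
      calc ‖iteratedFDerivWithin ℝ n (fun ξ : EuclideanSpace ℝ (Fin d) =>
            (1 + t ξ * t ξ)⁻¹ • (1:ℂ) + (t ξ * (1 + t ξ * t ξ)⁻¹) • Complex.I)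
            (Stmt11Aux.U (EuclideanSpace ℝ (Fin d))) ξ‖ ≤ C2 * ‖ξ‖ ^ (-(n:ℝ)) := h
        _ ≤ (C1 + C2) * ‖ξ‖ ^ (-(n:ℝ)) := mul_le_mul_of_nonneg_right (by linarith) hrp
end
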